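/- Multi-step Q-identity: in a deterministic finite-horizon MDP with exploration policy π and Q^1 = Q^π, Q^{j+1} = QVI(Q^j), for all timesteps i, states s, actions a_i and all k ≥ 1: Q^k_i(s, a_i) = max over (k−1)-length action continuations a_{i+1:i+k−1} of Q^1_i(s, a_i, a_{i+1:i+k−1}), where Q^1_i(s, a_{i:i+k−1}) denotes the expected return from s at time i taking the fixed action sequence a_{i:i+k−1} and then following π. -/

import Mathlib

open Finset Classical

/-- Value function of a (time-indexed, stochastic) policy by fuel recursion:
`polV A f R pi t n s` is the expected sum of the next `n` rewards from state `s`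
at timestep `t` following `pi`. -/
noncomputable def polV {S : Type*} (A : ℕ) (f : S → Fin A → S) (R : S → Fin A → ℝ)
    (pi : ℕ → S → Fin A → ℝ) : ℕ → ℕ → S → ℝ
  | _, 0, _ => 0
  | t, n + 1, s => ∑ a : Fin A, pi t s a * (R s a + polV A f R pi (t + 1) n (f s a))

/-- Action-sequence Q-function: `seqQ A T f R pi t s as` is the expected return from state `s`
at timestep `t`, taking the fixed action sequence `as` and then following `pi` until the
horizon `T`. -/
noncomputable def seqQ {S : Type*} (A T : ℕ) (f : S → Fin A → S) (R : S → Fin A → ℝ)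
    (pi : ℕ → S → Fin A → ℝ) : ℕ → S → List (Fin A) → ℝ
  | t, s, [] => polV A f R pi t (T + 1 - t) s
  | t, s, a :: rest => R s a + seqQ A T f R pi (t + 1) (f s a) rest

/-- Q-value-iteration iterates: `qIter ... Q1 0 = Q1`, `qIter ... Q1 (j+1) = QVI (qIter ... Q1 j)`,
where `QVI(Q)_t(s,a) = R(s,a) + max_{a'} Q_{t+1}(f(s,a), a')` (and `Q_{T+1} ≡ 0`). -/
noncomputable def qIter {S : Type*} (A T : ℕ) (f : S → Fin A → S) (R : S → Fin A → ℝ)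
    (Q1 : ℕ → S → Fin A → ℝ) : ℕ → ℕ → S → Fin A → ℝ
  | 0 => Q1
  | j + 1 => fun t s a =>
      R s a + if t < T then ⨆ a' : Fin A, qIter A T f R Q1 j (t + 1) (f s a) a' else 0

lemma add_ciSup_fin {ι : Type*} [Finite ι] [Nonempty ι] (c : ℝ) (g : ι → ℝ) :
    c + ⨆ i, g i = ⨆ i, c + g i := by
  apply le_antisymm
  · obtain ⟨i0, hi0⟩ := exists_eq_ciSup_of_finite (f := g)
    rw [← hi0]
    exact le_ciSup (f := fun i => c + g i) (Set.Finite.bddAbove (Set.finite_range _)) i0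
  · apply ciSup_le
    intro i
    exact add_le_add le_rfl (le_ciSup (f := g) (Set.Finite.bddAbove (Set.finite_range _)) i)

lemma ciSup_fin_cons {A m : ℕ} (hA : 0 < A) (F : (Fin (m + 1) → Fin A) → ℝ) :
    (⨆ g : Fin (m + 1) → Fin A, F g)
      = ⨆ a : Fin A, ⨆ h : Fin m → Fin A, F (Fin.cons a h) := by
  haveI : Nonempty (Fin A) := ⟨⟨0, hA⟩⟩
  haveI : Nonempty (Fin m → Fin A) := ⟨fun _ => ⟨0, hA⟩⟩
  apply le_antisymm
  · apply ciSup_le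
    intro g
    have hg : F g = F (Fin.cons (g 0) (Fin.tail g)) := by rw [Fin.cons_self_tail]
    rw [hg]
    refine le_trans (le_ciSup (f := fun h : Fin m → Fin A => F (Fin.cons (g 0) h))
      (Set.Finite.bddAbove (Set.finite_range _)) (Fin.tail g)) ?_
    exact le_ciSup (f := fun a : Fin A => ⨆ h : Fin m → Fin A, F (Fin.cons a h))
      (Set.Finite.bddAbove (Set.finite_range _)) (g 0)
  · apply ciSup_le; intro a
    apply ciSup_le; intro h
    exact le_ciSup (f := F) (Set.Finite.bddAbove (Set.finite_range _)) (Fin.cons a h)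

lemma multi_step_aux {S : Type*} (A T : ℕ) (hApos : 0 < A)
    (f : S → Fin A → S) (R : S → Fin A → ℝ)
    (pi : ℕ → S → Fin A → ℝ) :
    ∀ (m t : ℕ), t + m ≤ T → ∀ (s : S) (a : Fin A),
    qIter A T f R (fun t' s' a' => seqQ A T f R pi t' s' [a']) m t s a
      = ⨆ rest : Fin m → Fin A, seqQ A T f R pi t s (a :: List.ofFn rest) := by
  haveI : Nonempty (Fin A) := ⟨⟨0, hApos⟩⟩
  intro m
  induction m with
  | zero =>
    intro t htm s a
    simp [qIter, ciSup_unique]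
  | succ m ih =>
    intro t htm s a
    haveI : Nonempty (Fin m → Fin A) := ⟨fun _ => ⟨0, hApos⟩⟩
    have hlt : t < T := by omega
    have hL : qIter A T f R (fun t' s' a' => seqQ A T f R pi t' s' [a']) (m + 1) t s a
        = R s a + ⨆ a' : Fin A,
            qIter A T f R (fun t' s' a' => seqQ A T f R pi t' s' [a']) m (t + 1) (f s a) a' := by
      simp [qIter, hlt]
    rw [hL]
    have hIH : ∀ a' : Fin A,
        qIter A T f R (fun t' s' a' => seqQ A T f R pi t' s' [a']) m (t + 1) (f s a) a'
          = ⨆ rest : Fin m → Fin A, seqQ A T f R pi (t + 1) (f s a) (a' :: List.ofFn rest) := by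
      intro a'; exact ih (t + 1) (by omega) (f s a) a'
    simp only [hIH]
    rw [ciSup_fin_cons hApos (fun g : Fin (m + 1) → Fin A =>
      seqQ A T f R pi t s (a :: List.ofFn g))]
    have hsplit : ∀ (a' : Fin A) (h : Fin m → Fin A),
        seqQ A T f R pi t s (a :: List.ofFn (Fin.cons a' h))
          = R s a + seqQ A T f R pi (t + 1) (f s a) (a' :: List.ofFn h) := by
      intro a' h
      rw [List.ofFn_succ]
      simp [seqQ]
    simp only [hsplit]
    rw [add_ciSup_fin]
    exact iSup_congr fun a' => add_ciSup_fin _ _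

/--
Multi-step Q-identity.  In a deterministic finite-horizon MDP with
exploration policy `pi` (a probability distribution over actions at every state and time),
let `Q^1 = Q^pi` and `Q^{j+1} = QVI(Q^j)`.  Then for all `k ≥ 1`, timesteps `1 ≤ t` with
`t + k − 1 ≤ T`, states `s` and actions `a`,
`Q^k_t(s, a) = max over (k−1)-length continuations rest of Q^1_t(s, a :: rest)`,
where `Q^1_t(s, as)` denotes the expected return from `s` at time `t` taking the fixed
action sequence `as` and then following `pi`.
-/
theorem multi_step_Q_identity
    {S : Type*} (A T : ℕ) (hApos : 0 < A)
    (f : S → Fin A → S) (R : S → Fin A → ℝ)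
    (pi : ℕ → S → Fin A → ℝ)
    (hprob : ∀ t s, ∑ a : Fin A, pi t s a = 1)
    (hnn : ∀ t s a, 0 ≤ pi t s a)
    (k t : ℕ) (hk : 1 ≤ k) (ht : 1 ≤ t) (htk : t + k ≤ T + 1)
    (s : S) (a : Fin A) :
    qIter A T f R (fun t' s' a' => seqQ A T f R pi t' s' [a']) (k - 1) t s a
      = ⨆ rest : Fin (k - 1) → Fin A,
          seqQ A T f R pi t s (a :: List.ofFn rest) := by
  obtain ⟨m, rfl⟩ : ∃ m, k = m + 1 := ⟨k - 1, by omega⟩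
  simpa using multi_step_aux A T hApos f R pi m t (by omega) s a
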